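/- If H_c = U(gl_2) ⋉ T(V) / ([x,y]=0=[x_1,y_1], [v,w] determined by y_1x - x_1y - c central) is an infinitesimal Cherednik algebra (i.e., satisfies the PBW property), then c ∈ Z(U(gl_2)) satisfies the Jacobi condition 4ΔF(F(c)) + 6F(c) - 6G(F(c)) - G(G(c)) = 0. -/

import Mathlib

set_option maxHeartbeats 1000000


namespace Stmt12Aux

variable {k A : Type} [Field k] [Ring A] [Algebra k A]

theorem cancel_nat {k A : Type} [Field k] [CharZero k] [Ring A] [Algebra k A]
    {x : A} {n : ℕ} (hn : n ≠ 0) (h : (n:A)*x = 0) : x = 0 := by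
  have h1 : (n:ℕ) • x = 0 := by rwa [nsmul_eq_mul]
  have h2 : ((n:ℕ):k) • x = 0 := by rwa [Nat.cast_smul_eq_nsmul]
  have h3 := congrArg (fun z => (((n:ℕ):k)⁻¹) • z) h2
  simpa [smul_smul, inv_mul_cancel₀ (Nat.cast_ne_zero.mpr hn : ((n:ℕ):k) ≠ 0)] using h3


variable {k A : Type} [Field k] [Ring A] [Algebra k A]

theorem hpow_e (e h : A) (he : h*e = e*h + 2*e) : ∀ n : ℕ, h^n*e = e*(h+2)^n := by
  intro n
  induction n with
  | zero => simp
  | succ n ih =>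
    rw [pow_succ, pow_succ]
    linear_combination (norm := noncomm_ring) h^n*he + ih*h + 2*ih

theorem hpow_f (e h : A) (he : h*e = e*h - 2*e) : ∀ n : ℕ, h^n*e = e*(h-2)^n := by
  intro n
  induction n with
  | zero => simp
  | succ n ih =>
    rw [pow_succ, pow_succ]
    linear_combination (norm := noncomm_ring) h^n*he + ih*h - 2*ih

theorem h_fpow (f h : A) (hf : h*f = f*h - 2*f) : ∀ n : ℕ, h*f^n = f^n*h - 2*(n:A)*f^n := by
  intro n
  induction n with
  | zero => simp
  | succ n ih =>
    simp only [pow_succ]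
    push_cast
    linear_combination (norm := noncomm_ring) ih*f + f^n*hf

theorem fpow_e (e f h : A) (hef : e*f = f*e + h) (hf : h*f = f*h - 2*f) :
    ∀ n : ℕ, f^(n+1)*e = e*f^(n+1) - ((n:A)+1)*f^n*h + ((n:A)+1)*(n:A)*f^n := by
  intro n
  induction n with
  | zero => simp only [zero_add, pow_one, pow_zero, Nat.cast_zero]
            linear_combination (norm := noncomm_ring) -hef
  | succ n ih =>
    simp only [pow_succ] at ih ⊢
    push_cast
    linear_combination (norm := noncomm_ring) -(f^n*f)*hef + ih*f - ((n:A)+1)*f^n*hf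

theorem fpow_e' (e f h : A) (hef : e*f = f*e + h) (hf : h*f = f*h - 2*f) :
    ∀ b : ℕ, f^b*e = e*f^b - (b:A)*f^(b-1)*h + (b:A)*((b:A)-1)*f^(b-1) := by
  intro b
  cases b with
  | zero => simp
  | succ n =>
    rw [Nat.add_sub_cancel]
    push_cast
    rw [add_sub_cancel_right]
    exact fpow_e e f h hef hf n

theorem adjoin_subset_span (e f h t : A)
    (he : h*e = e*h + 2*e) (hf : h*f = f*h - 2*f) (hef : e*f = f*e + h)
    (te : t*e = e*t) (tf : t*f = f*t) (th : t*h = h*t)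
    {z : A} (hz : z ∈ Algebra.adjoin k ({e, f, h, t} : Set A)) :
    z ∈ Submodule.span k (Set.range fun m : Fin 4 → ℕ => e^m 0*f^m 1*h^m 2*t^m 3) := by
  set S := Submodule.span k (Set.range fun m : Fin 4 → ℕ => e^m 0*f^m 1*h^m 2*t^m 3) with hSdef
  have hmon : ∀ a b cc d : ℕ, e^a*f^b*h^cc*t^d ∈ S :=
    fun a b cc d => Submodule.subset_span ⟨![a, b, cc, d], by simp⟩
  have castmulS : ∀ (n : ℕ) {x : A}, x ∈ S → (n:A)*x ∈ S := by
    intro n x hx; rw [← nsmul_eq_mul]; exact nsmul_mem hx n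
  -- the commutative part generated by h
  set H := Submodule.span k (Set.range fun n : ℕ => h^n) with hHdef
  have castmulH : ∀ (n : ℕ) {x : A}, x ∈ H → (n:A)*x ∈ H := by
    intro n x hx; rw [← nsmul_eq_mul]; exact nsmul_mem hx n
  have hH : ∀ n : ℕ, h^n ∈ H := fun n => Submodule.subset_span ⟨n, rfl⟩
  have hH1 : (1:A) ∈ H := by simpa using hH 0
  have hHh : h ∈ H := by simpa using hH 1
  have hHc : ∀ n : ℕ, (n:A) ∈ H := fun n => by simpa using castmulH n hH1
  have hHmul : ∀ x ∈ H, ∀ y ∈ H, x*y ∈ H := by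
    intro x hx
    induction hx using Submodule.span_induction with
    | mem x hxm =>
      obtain ⟨n, rfl⟩ := hxm
      intro y hy
      induction hy using Submodule.span_induction with
      | mem y hym => obtain ⟨m, rfl⟩ := hym; rw [← pow_add]; exact hH _
      | zero => rw [mul_zero]; exact zero_mem _
      | add y₁ y₂ h₁ h₂ ih₁ ih₂ => rw [mul_add]; exact add_mem ih₁ ih₂
      | smul a y hy ih => rw [mul_smul_comm]; exact Submodule.smul_mem _ a ih
    | zero => intro y hy; rw [zero_mul]; exact zero_mem _
    | add x₁ x₂ h₁ h₂ ih₁ ih₂ => intro y hy; rw [add_mul]; exact add_mem (ih₁ y hy) (ih₂ y hy)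
    | smul a x hx ih => intro y hy; rw [smul_mul_assoc]; exact Submodule.smul_mem _ a (ih y hy)
  have hHp2 : ∀ n : ℕ, (h+2)^n ∈ H := by
    intro n
    induction n with
    | zero => simpa using hH1
    | succ n ih =>
      rw [pow_succ]
      exact hHmul _ ih _ (add_mem hHh (by simpa using hHc 2))
  have hHm2 : ∀ n : ℕ, (h-2)^n ∈ H := by
    intro n
    induction n with
    | zero => simpa using hH1
    | succ n ih =>
      rw [pow_succ]
      exact hHmul _ ih _ (sub_mem hHh (by simpa using hHc 2))
  -- monomials with a middle element of H
  have hefbz : ∀ (a b d : ℕ) (z : A), z ∈ H → e^a*f^b*z*t^d ∈ S := by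
    intro a b d z hz
    induction hz using Submodule.span_induction with
    | mem z hzm => obtain ⟨n, rfl⟩ := hzm; exact hmon a b n d
    | zero => simpa using zero_mem S
    | add z₁ z₂ h₁ h₂ ih₁ ih₂ =>
      have : e^a*f^b*(z₁+z₂)*t^d = e^a*f^b*z₁*t^d + e^a*f^b*z₂*t^d := by noncomm_ring
      rw [this]; exact add_mem ih₁ ih₂
    | smul r z hz ih =>
      have : e^a*f^b*(r • z)*t^d = r • (e^a*f^b*z*t^d) := by
        rw [mul_smul_comm, smul_mul_assoc]
      rw [this]; exact Submodule.smul_mem _ r ih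
  -- commuting powers of t
  have hte : ∀ d : ℕ, t^d*e = e*t^d := fun d => ((Commute.pow_left te d).eq)
  have htf : ∀ d : ℕ, t^d*f = f*t^d := fun d => ((Commute.pow_left tf d).eq)
  have hth : ∀ d : ℕ, t^d*h = h*t^d := fun d => ((Commute.pow_left th d).eq)
  -- multiplication of a monomial by a generator on the right
  have hSe : ∀ a b cc d : ℕ, (e^a*f^b*h^cc*t^d)*e ∈ S := by
    intro a b cc d
    have e1 : (e^a*f^b*h^cc*t^d)*e = e^a*(f^b*e)*((h+2)^cc*t^d) := by
      calc (e^a*f^b*h^cc*t^d)*e = e^a*f^b*(h^cc*(t^d*e)) := by noncomm_ring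
        _ = e^a*f^b*(h^cc*e*t^d) := by rw [hte d]; noncomm_ring
        _ = e^a*f^b*(e*(h+2)^cc*t^d) := by rw [hpow_e e h he cc]
        _ = e^a*(f^b*e)*((h+2)^cc*t^d) := by noncomm_ring
    rw [e1, fpow_e' e f h hef hf b]
    have e2 : e^a*(e*f^b - (b:A)*f^(b-1)*h + (b:A)*((b:A)-1)*f^(b-1))*((h+2)^cc*t^d)
        = e^(a+1)*f^b*((h+2)^cc)*t^d
          - (b:A)*(e^a*f^(b-1)*(h*(h+2)^cc)*t^d)
          + (b:A)*((b:A)*(e^a*f^(b-1)*((h+2)^cc)*t^d) - e^a*f^(b-1)*((h+2)^cc)*t^d) := by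
      have cb : (b:A)*e^a = e^a*(b:A) := (Nat.cast_commute b (e^a)).eq
      rw [pow_succ]
      linear_combination (norm := noncomm_ring)
        cb*(f^(b-1)*(h*((h+2)^cc*t^d))) + cb*(f^(b-1)*((h+2)^cc*t^d))
        - (b:A)*cb*(f^(b-1)*((h+2)^cc*t^d)) - cb*((b:A)*(f^(b-1)*((h+2)^cc*t^d)))
    rw [e2]
    refine add_mem (sub_mem ?_ ?_) ?_
    · exact hefbz (a+1) b d _ (hHp2 cc)
    · exact castmulS b (hefbz a (b-1) d _ (hHmul _ hHh _ (hHp2 cc)))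
    · exact castmulS b (sub_mem (castmulS b (hefbz a (b-1) d _ (hHp2 cc)))
        (hefbz a (b-1) d _ (hHp2 cc)))
  have hSf : ∀ a b cc d : ℕ, (e^a*f^b*h^cc*t^d)*f ∈ S := by
    intro a b cc d
    have e1 : (e^a*f^b*h^cc*t^d)*f = e^a*f^(b+1)*((h-2)^cc)*t^d := by
      calc (e^a*f^b*h^cc*t^d)*f = e^a*f^b*(h^cc*(t^d*f)) := by noncomm_ring
        _ = e^a*f^b*(h^cc*f*t^d) := by rw [htf d]; noncomm_ring
        _ = e^a*f^b*(f*(h-2)^cc*t^d) := by rw [hpow_f f h hf cc]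
        _ = e^a*f^(b+1)*((h-2)^cc)*t^d := by rw [pow_succ]; noncomm_ring
    rw [e1]
    exact hefbz a (b+1) d _ (hHm2 cc)
  have hSh : ∀ a b cc d : ℕ, (e^a*f^b*h^cc*t^d)*h ∈ S := by
    intro a b cc d
    have e1 : (e^a*f^b*h^cc*t^d)*h = e^a*f^b*h^(cc+1)*t^d := by
      calc (e^a*f^b*h^cc*t^d)*h = e^a*f^b*(h^cc*(t^d*h)) := by noncomm_ring
        _ = e^a*f^b*h^(cc+1)*t^d := by rw [hth d, pow_succ]; noncomm_ring
    rw [e1]; exact hmon a b (cc+1) d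
  have hSt : ∀ a b cc d : ℕ, (e^a*f^b*h^cc*t^d)*t ∈ S := by
    intro a b cc d
    have e1 : (e^a*f^b*h^cc*t^d)*t = e^a*f^b*h^cc*t^(d+1) := by
      rw [pow_succ]; noncomm_ring
    rw [e1]; exact hmon a b cc (d+1)
  -- S is closed under right multiplication by generators
  have hSmul : ∀ (g : A), (∀ a b cc d : ℕ, (e^a*f^b*h^cc*t^d)*g ∈ S) →
      ∀ u ∈ S, u*g ∈ S := by
    intro g hg u hu
    induction hu using Submodule.span_induction with
    | mem u hum => obtain ⟨m, rfl⟩ := hum; exact hg _ _ _ _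
    | zero => rw [zero_mul]; exact zero_mem _
    | add u₁ u₂ h₁ h₂ ih₁ ih₂ => rw [add_mul]; exact add_mem ih₁ ih₂
    | smul r u hu ih => rw [smul_mul_assoc]; exact Submodule.smul_mem _ r ih
  have hSpow : ∀ (g : A), (∀ u ∈ S, u*g ∈ S) → ∀ u ∈ S, ∀ n : ℕ, u*g^n ∈ S := by
    intro g hg u hu n
    induction n with
    | zero => simpa using hu
    | succ n ih => rw [pow_succ, ← mul_assoc]; exact hg _ ih
  have hSS : ∀ u ∈ S, ∀ v ∈ S, u*v ∈ S := by
    intro u hu v hv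
    induction hv using Submodule.span_induction with
    | mem v hvm =>
      obtain ⟨m, rfl⟩ := hvm
      have : u*(e^m 0*f^m 1*h^m 2*t^m 3) = (((u*e^m 0)*f^m 1)*h^m 2)*t^m 3 := by
        simp only [mul_assoc]
      rw [this]
      exact hSpow t (hSmul t hSt) _
        (hSpow h (hSmul h hSh) _
          (hSpow f (hSmul f hSf) _
            (hSpow e (hSmul e hSe) _ hu _) _) _) _
    | zero => rw [mul_zero]; exact zero_mem _
    | add v₁ v₂ h₁ h₂ ih₁ ih₂ => rw [mul_add]; exact add_mem ih₁ ih₂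
    | smul r v hv ih => rw [mul_smul_comm]; exact Submodule.smul_mem _ r ih
  -- finish by adjoin induction
  induction hz using Algebra.adjoin_induction with
  | mem g hg =>
    rcases hg with rfl | rfl | rfl | rfl
    · exact Submodule.subset_span ⟨![1,0,0,0], by simp⟩
    · exact Submodule.subset_span ⟨![0,1,0,0], by simp⟩
    · exact Submodule.subset_span ⟨![0,0,1,0], by simp⟩
    · exact Submodule.subset_span ⟨![0,0,0,1], by simp⟩
  | algebraMap r =>
    rw [Algebra.algebraMap_eq_smul_one]
    exact Submodule.smul_mem _ r (by simpa using hmon 0 0 0 0)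
  | add x y hx hy ihx ihy => exact add_mem ihx ihy
  | mul x y hx hy ihx ihy => exact hSS x ihx y ihy

theorem extract_zero (e f h t x y x1 y1 : A)
    (hPBW : LinearIndependent k (fun m : Fin 8 → ℕ =>
      e ^ m 0 * f ^ m 1 * h ^ m 2 * t ^ m 3 * x ^ m 4 * y ^ m 5 * x1 ^ m 6 * y1 ^ m 7))
    {Z W : A}
    (hZ : Z ∈ Submodule.span k (Set.range fun m : Fin 4 → ℕ => e^m 0*f^m 1*h^m 2*t^m 3))
    (hW : W ∈ Submodule.span k (Set.range fun m : Fin 4 → ℕ => e^m 0*f^m 1*h^m 2*t^m 3))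
    (hzero : Z*x + W*y = 0) : Z = 0 ∧ W = 0 := by
  classical
  set b : (Fin 8 → ℕ) → A := fun m =>
    e ^ m 0 * f ^ m 1 * h ^ m 2 * t ^ m 3 * x ^ m 4 * y ^ m 5 * x1 ^ m 6 * y1 ^ m 7 with hb
  obtain ⟨ζ, hζ⟩ := Finsupp.mem_span_range_iff_exists_finsupp.mp hZ
  obtain ⟨ω, hω⟩ := Finsupp.mem_span_range_iff_exists_finsupp.mp hW
  have injx : Function.Injective (fun m : Fin 4 → ℕ => ![m 0, m 1, m 2, m 3, 1, 0, 0, 0]) := by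
    intro m m' hmm
    funext j
    fin_cases j
    · simpa using congrFun hmm 0
    · simpa using congrFun hmm 1
    · simpa using congrFun hmm 2
    · simpa using congrFun hmm 3
  have injy : Function.Injective (fun m : Fin 4 → ℕ => ![m 0, m 1, m 2, m 3, 0, 1, 0, 0]) := by
    intro m m' hmm
    funext j
    fin_cases j
    · simpa using congrFun hmm 0
    · simpa using congrFun hmm 1
    · simpa using congrFun hmm 2
    · simpa using congrFun hmm 3
  set ix : (Fin 4 → ℕ) ↪ (Fin 8 → ℕ) :=
    ⟨fun m => ![m 0, m 1, m 2, m 3, 1, 0, 0, 0], injx⟩ with hix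
  set iy : (Fin 4 → ℕ) ↪ (Fin 8 → ℕ) :=
    ⟨fun m => ![m 0, m 1, m 2, m 3, 0, 1, 0, 0], injy⟩ with hiy
  have hbix : (b ∘ ix) = fun m : Fin 4 → ℕ => (e^m 0*f^m 1*h^m 2*t^m 3)*x := by
    funext m
    have e4 : (![m 0, m 1, m 2, m 3, 1, 0, 0, 0] : Fin 8 → ℕ) 4 = 1 := rfl
    have e5 : (![m 0, m 1, m 2, m 3, 1, 0, 0, 0] : Fin 8 → ℕ) 5 = 0 := rfl
    have e6 : (![m 0, m 1, m 2, m 3, 1, 0, 0, 0] : Fin 8 → ℕ) 6 = 0 := rfl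
    have e7 : (![m 0, m 1, m 2, m 3, 1, 0, 0, 0] : Fin 8 → ℕ) 7 = 0 := rfl
    simp [hb, hix, Function.comp, e4, e5, e6, e7]
  have hbiy : (b ∘ iy) = fun m : Fin 4 → ℕ => (e^m 0*f^m 1*h^m 2*t^m 3)*y := by
    funext m
    have e4 : (![m 0, m 1, m 2, m 3, 0, 1, 0, 0] : Fin 8 → ℕ) 4 = 0 := rfl
    have e5 : (![m 0, m 1, m 2, m 3, 0, 1, 0, 0] : Fin 8 → ℕ) 5 = 1 := rfl
    have e6 : (![m 0, m 1, m 2, m 3, 0, 1, 0, 0] : Fin 8 → ℕ) 6 = 0 := rfl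
    have e7 : (![m 0, m 1, m 2, m 3, 0, 1, 0, 0] : Fin 8 → ℕ) 7 = 0 := rfl
    simp [hb, hiy, Function.comp, e4, e5, e6, e7]
  set χ : (Fin 8 → ℕ) →₀ k := Finsupp.embDomain ix ζ + Finsupp.embDomain iy ω with hχ
  have hsum : Finsupp.linearCombination k b χ = Z*x + W*y := by
    rw [hχ, map_add, Finsupp.linearCombination_embDomain, Finsupp.linearCombination_embDomain,
      hbix, hbiy]
    rw [Finsupp.linearCombination_apply, Finsupp.linearCombination_apply]
    rw [← hζ, ← hω, Finsupp.sum_mul, Finsupp.sum_mul]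
    simp [smul_mul_assoc]
  have hχ0 : χ = 0 := linearIndependent_iff.mp hPBW χ (by rw [hsum, hzero])
  have hnoty : ∀ m : Fin 4 → ℕ, (ix m) ∉ Set.range iy := by
    rintro m ⟨m', hm'⟩
    have := congrFun hm' 4
    simp [hix, hiy] at this
  have hnotx : ∀ m : Fin 4 → ℕ, (iy m) ∉ Set.range ix := by
    rintro m ⟨m', hm'⟩
    have := congrFun hm' 4
    simp [hix, hiy] at this
  have hζ0 : ζ = 0 := by
    ext m
    have hc := DFunLike.congr_fun hχ0 (ix m)
    rw [hχ, Finsupp.add_apply, Finsupp.embDomain_apply,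
      Finsupp.embDomain_notin_range iy ω _ (hnoty m)] at hc
    simpa using hc
  have hω0 : ω = 0 := by
    ext m
    have hc := DFunLike.congr_fun hχ0 (iy m)
    rw [hχ, Finsupp.add_apply, Finsupp.embDomain_apply_self,
      Finsupp.embDomain_notin_range ix ζ _ (hnotx m)] at hc
    simpa using hc
  constructor
  · rw [← hζ, hζ0]; simp
  · rw [← hω, hω0]; simp


end Stmt12Aux

theorem stmt12 {k : Type} [Field k] [CharZero k] {A : Type} [Ring A] [Algebra k A]
    (ee ff hh tt xx yy x1 y1 : A) (c fc gc : A)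
    (hHE : ⁅hh, ee⁆ = 2*ee) (hHF : ⁅hh, ff⁆ = -(2*ff)) (hEF : ⁅ee, ff⁆ = hh)
    (hTE : ⁅tt, ee⁆ = 0) (hTF : ⁅tt, ff⁆ = 0) (hTH : ⁅tt, hh⁆ = 0)
    (hEX : ⁅ee, xx⁆ = 0) (hEY : ⁅ee, yy⁆ = xx)
    (hFX : ⁅ff, xx⁆ = yy) (hFY : ⁅ff, yy⁆ = 0)
    (hHX : ⁅hh, xx⁆ = xx) (hHY : ⁅hh, yy⁆ = -yy)
    (hTX : ⁅tt, xx⁆ = xx) (hTY : ⁅tt, yy⁆ = yy)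
    (hEX1 : ⁅ee, x1⁆ = 0) (hEY1 : ⁅ee, y1⁆ = x1)
    (hFX1 : ⁅ff, x1⁆ = y1) (hFY1 : ⁅ff, y1⁆ = 0)
    (hHX1 : ⁅hh, x1⁆ = x1) (hHY1 : ⁅hh, y1⁆ = -y1)
    (hTX1 : ⁅tt, x1⁆ = -x1) (hTY1 : ⁅tt, y1⁆ = -y1)
    (hcmmem : c ∈ Algebra.adjoin k ({ee, ff, hh, tt} : Set A))
    (hcmc : ∀ u ∈ Algebra.adjoin k ({ee, ff, hh, tt} : Set A), c * u = u * c)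
    (hfcmmem : fc ∈ Algebra.adjoin k ({ee, ff, hh, tt} : Set A))
    (hfcmc : ∀ u ∈ Algebra.adjoin k ({ee, ff, hh, tt} : Set A), fc * u = u * fc)
    (hgcmmem : gc ∈ Algebra.adjoin k ({ee, ff, hh, tt} : Set A))
    (hgcmc : ∀ u ∈ Algebra.adjoin k ({ee, ff, hh, tt} : Set A), gc * u = u * gc)
    (hcx : ⁅c, xx⁆ = (2*hh*fc + gc)*xx + 4*ee*fc*yy)
    (hcy : ⁅c, yy⁆ = (-(2*hh*fc) + gc)*yy + 4*ff*fc*xx)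
    (hXY : ⁅xx, yy⁆ = 0) (hX1Y1 : ⁅x1, y1⁆ = 0)
    (hY1X : ⁅y1, xx⁆ = 2*hh*fc + gc)
    (hX1X : ⁅x1, xx⁆ = -(4*ee*fc))
    (hY1Y : ⁅y1, yy⁆ = 4*ff*fc)
    (hX1Y : ⁅x1, yy⁆ = 2*hh*fc - gc)
    (hgen : Algebra.adjoin k ({ee, ff, hh, tt, xx, yy, x1, y1} : Set A) = ⊤)
    (hPBW : LinearIndependent k (fun m : Fin 8 → ℕ =>
      ee ^ m 0 * ff ^ m 1 * hh ^ m 2 * tt ^ m 3 * xx ^ m 4 * yy ^ m 5 * x1 ^ m 6 * y1 ^ m 7))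
    (ffc gfc fgc ggc : A)
    (hffcmmem : ffc ∈ Algebra.adjoin k ({ee, ff, hh, tt} : Set A))
    (hffcmc : ∀ u ∈ Algebra.adjoin k ({ee, ff, hh, tt} : Set A), ffc * u = u * ffc)
    (hgfcmmem : gfc ∈ Algebra.adjoin k ({ee, ff, hh, tt} : Set A))
    (hgfcmc : ∀ u ∈ Algebra.adjoin k ({ee, ff, hh, tt} : Set A), gfc * u = u * gfc)
    (hfgcmmem : fgc ∈ Algebra.adjoin k ({ee, ff, hh, tt} : Set A))
    (hfgcmc : ∀ u ∈ Algebra.adjoin k ({ee, ff, hh, tt} : Set A), fgc * u = u * fgc)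
    (hggcmmem : ggc ∈ Algebra.adjoin k ({ee, ff, hh, tt} : Set A))
    (hggcmc : ∀ u ∈ Algebra.adjoin k ({ee, ff, hh, tt} : Set A), ggc * u = u * ggc)
    (hfcx : ⁅fc, xx⁆ = (2*hh*ffc + gfc)*xx + 4*ee*ffc*yy)
    (hgcx : ⁅gc, xx⁆ = (2*hh*fgc + ggc)*xx + 4*ee*fgc*yy)
    :
    4*(4*ff*ee + hh*hh + 2*hh)*ffc + 6*fc - 6*gfc - ggc = 0 := by
  classical
  -- generator memberships
  have memE : ee ∈ Algebra.adjoin k ({ee, ff, hh, tt} : Set A) := Algebra.subset_adjoin (by simp)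
  have memF : ff ∈ Algebra.adjoin k ({ee, ff, hh, tt} : Set A) := Algebra.subset_adjoin (by simp)
  have memH : hh ∈ Algebra.adjoin k ({ee, ff, hh, tt} : Set A) := Algebra.subset_adjoin (by simp)
  have memT : tt ∈ Algebra.adjoin k ({ee, ff, hh, tt} : Set A) := Algebra.subset_adjoin (by simp)
  -- product forms of the bracket relations
  rw [Ring.lie_def] at hHE hHF hEF hTE hTF hTH hFX hFY hHY hXY hY1X hY1Y hfcx hgcx
  have sHE : hh*ee = ee*hh + 2*ee := by linear_combination (norm := noncomm_ring) hHE
  have sHF : hh*ff = ff*hh - 2*ff := by linear_combination (norm := noncomm_ring) hHF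
  have sFH : ff*hh = hh*ff + 2*ff := by linear_combination (norm := noncomm_ring) -hHF
  have sEFp : ee*ff = ff*ee + hh := by linear_combination (norm := noncomm_ring) hEF
  have sFE : ff*ee = ee*ff - hh := by linear_combination (norm := noncomm_ring) -hEF
  have sTE : tt*ee = ee*tt := by linear_combination (norm := noncomm_ring) hTE
  have sTF : tt*ff = ff*tt := by linear_combination (norm := noncomm_ring) hTF
  have sTH : tt*hh = hh*tt := by linear_combination (norm := noncomm_ring) hTH
  have sFX : ff*xx = xx*ff + yy := by linear_combination (norm := noncomm_ring) hFX
  have sXF : xx*ff = ff*xx - yy := by linear_combination (norm := noncomm_ring) -hFX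
  have sYF : yy*ff = ff*yy := by linear_combination (norm := noncomm_ring) -hFY
  have sYH : yy*hh = hh*yy + yy := by linear_combination (norm := noncomm_ring) -hHY
  have sY1X : y1*xx = xx*y1 + (2*hh*fc + gc) := by linear_combination (norm := noncomm_ring) hY1X
  have sY1Y : y1*yy = yy*y1 + 4*ff*fc := by linear_combination (norm := noncomm_ring) hY1Y
  have sXY : xx*yy = yy*xx := by linear_combination (norm := noncomm_ring) hXY
  have sXfc : xx*fc = fc*xx - ((2*hh*ffc + gfc)*xx + 4*ee*ffc*yy) := by
    linear_combination (norm := noncomm_ring) -hfcx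
  -- commutation of the central elements with generators
  have cfcff : fc*ff = ff*fc := hfcmc ff memF
  have cgcff : gc*ff = ff*gc := hgcmc ff memF
  have cffcff : ffc*ff = ff*ffc := hffcmc ff memF
  have cgfcff : gfc*ff = ff*gfc := hgfcmc ff memF
  have cfgcff : fgc*ff = ff*fgc := hfgcmc ff memF
  have cggcff : ggc*ff = ff*ggc := hggcmc ff memF
  have cffcee : ffc*ee = ee*ffc := hffcmc ee memE
  have cgfcee : gfc*ee = ee*gfc := hgfcmc ee memE
  have cfgcee : fgc*ee = ee*fgc := hfgcmc ee memE
  -- the commutator of fc (resp. gc) with yy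
  have d1 : fc*yy - yy*fc = ff*(fc*xx - xx*fc) - (fc*xx - xx*fc)*ff := by
    linear_combination (norm := noncomm_ring) sFX*fc - fc*sFX + cfcff*xx - xx*cfcff
  have d2 : ff*(fc*xx - xx*fc) - (fc*xx - xx*fc)*ff = 4*ff*ffc*xx - 2*hh*ffc*yy + gfc*yy := by
    rw [hfcx]
    linear_combination (norm := noncomm_ring) 2*sFH*(ffc*xx) + 4*sFE*(ffc*yy)
      - 2*hh*cffcff*xx - 2*(hh*ffc)*sXF - gfc*sXF - cgfcff*xx - 4*ee*cffcff*yy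
      - 4*(ee*ffc)*sYF
  have sYfc : yy*fc = fc*yy - (4*ff*ffc*xx - 2*hh*ffc*yy + gfc*yy) := by
    linear_combination (norm := noncomm_ring) -d1 - d2
  have d1g : gc*yy - yy*gc = ff*(gc*xx - xx*gc) - (gc*xx - xx*gc)*ff := by
    linear_combination (norm := noncomm_ring) sFX*gc - gc*sFX + cgcff*xx - xx*cgcff
  have d2g : ff*(gc*xx - xx*gc) - (gc*xx - xx*gc)*ff = 4*ff*fgc*xx - 2*hh*fgc*yy + ggc*yy := by
    rw [hgcx]
    linear_combination (norm := noncomm_ring) 2*sFH*(fgc*xx) + 4*sFE*(fgc*yy)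
      - 2*hh*cfgcff*xx - 2*(hh*fgc)*sXF - ggc*sXF - cggcff*xx - 4*ee*cfgcff*yy
      - 4*(ee*fgc)*sYF
  have sYgc : yy*gc = gc*yy - (4*ff*fgc*xx - 2*hh*fgc*yy + ggc*yy) := by
    linear_combination (norm := noncomm_ring) -d1g - d2g
  -- Jacobi-type consequence
  have p1 : y1*(xx*yy) = xx*yy*y1 + 4*(xx*ff)*fc + (2*hh*fc + gc)*yy := by
    linear_combination (norm := noncomm_ring) sY1X*yy + xx*sY1Y
  have p2 : y1*(yy*xx) = yy*xx*y1 + 4*(ff*fc)*xx + 2*yy*hh*fc + yy*gc := by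
    linear_combination (norm := noncomm_ring) sY1Y*xx + yy*sY1X
  have p0 : 4*(xx*ff)*fc + (2*hh*fc + gc)*yy - 4*(ff*fc)*xx - 2*yy*hh*fc - yy*gc = 0 := by
    linear_combination (norm := noncomm_ring) p2 - p1 + y1*sXY - sXY*y1
  have hmain : (8*ff*ffc - 4*ff*gfc + 4*ff*fgc)*xx
      + (-(16*ff*ee*ffc) - 4*hh*(hh*ffc) - 12*hh*ffc - 6*fc + 6*gfc + 2*hh*gfc
          - 2*hh*fgc + ggc)*yy = 0 := by
    linear_combination (norm := noncomm_ring) p0 - 4*sXF*fc - 4*ff*sXfc + 4*sYfc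
      + 2*sYH*fc + 2*hh*sYfc + 2*sYfc + sYgc + 8*sFH*(ffc*xx)
  -- memberships of the two coefficients
  have h2m : (2:A) ∈ Algebra.adjoin k ({ee, ff, hh, tt} : Set A) := by
    simpa using natCast_mem (Algebra.adjoin k ({ee, ff, hh, tt} : Set A)) 2
  have h4m : (4:A) ∈ Algebra.adjoin k ({ee, ff, hh, tt} : Set A) := by
    simpa using natCast_mem (Algebra.adjoin k ({ee, ff, hh, tt} : Set A)) 4
  have h6m : (6:A) ∈ Algebra.adjoin k ({ee, ff, hh, tt} : Set A) := by
    simpa using natCast_mem (Algebra.adjoin k ({ee, ff, hh, tt} : Set A)) 6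
  have h8m : (8:A) ∈ Algebra.adjoin k ({ee, ff, hh, tt} : Set A) := by
    simpa using natCast_mem (Algebra.adjoin k ({ee, ff, hh, tt} : Set A)) 8
  have h12m : (12:A) ∈ Algebra.adjoin k ({ee, ff, hh, tt} : Set A) := by
    simpa using natCast_mem (Algebra.adjoin k ({ee, ff, hh, tt} : Set A)) 12
  have h16m : (16:A) ∈ Algebra.adjoin k ({ee, ff, hh, tt} : Set A) := by
    simpa using natCast_mem (Algebra.adjoin k ({ee, ff, hh, tt} : Set A)) 16
  have Z1mem : (8*ff*ffc - 4*ff*gfc + 4*ff*fgc) ∈ Algebra.adjoin k ({ee, ff, hh, tt} : Set A) :=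
    add_mem (sub_mem (mul_mem (mul_mem h8m memF) hffcmmem)
      (mul_mem (mul_mem h4m memF) hgfcmmem)) (mul_mem (mul_mem h4m memF) hfgcmmem)
  have Z2mem : (-(16*ff*ee*ffc) - 4*hh*(hh*ffc) - 12*hh*ffc - 6*fc + 6*gfc + 2*hh*gfc
      - 2*hh*fgc + ggc) ∈ Algebra.adjoin k ({ee, ff, hh, tt} : Set A) := by
    refine add_mem (sub_mem (add_mem (add_mem (sub_mem (sub_mem (sub_mem ?_ ?_) ?_) ?_) ?_) ?_) ?_) ?_
    · exact neg_mem (mul_mem (mul_mem (mul_mem h16m memF) memE) hffcmmem)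
    · exact mul_mem (mul_mem h4m memH) (mul_mem memH hffcmmem)
    · exact mul_mem (mul_mem h12m memH) hffcmmem
    · exact mul_mem h6m hfcmmem
    · exact mul_mem h6m hgfcmmem
    · exact mul_mem (mul_mem h2m memH) hgfcmmem
    · exact mul_mem (mul_mem h2m memH) hfgcmmem
    · exact hggcmmem
  have hZ1span := Stmt12Aux.adjoin_subset_span (k := k) ee ff hh tt sHE sHF sEFp sTE sTF sTH Z1mem
  have hZ2span := Stmt12Aux.adjoin_subset_span (k := k) ee ff hh tt sHE sHF sEFp sTE sTF sTH Z2mem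
  obtain ⟨hZ10, hZ20⟩ :=
    Stmt12Aux.extract_zero ee ff hh tt xx yy x1 y1 hPBW hZ1span hZ2span hmain
  have h4fd : ((4:ℕ):A)*(ff*(2*ffc - gfc + fgc)) = 0 := by
    push_cast
    linear_combination (norm := noncomm_ring) hZ10
  have hfD : ff*(2*ffc - gfc + fgc) = 0 :=
    Stmt12Aux.cancel_nat (k := k) (by norm_num) h4fd
  have hhD : hh*(2*ffc - gfc + fgc) = 0 := by
    linear_combination (norm := noncomm_ring) ee*hfD - hfD*ee - sEFp*(2*ffc - gfc + fgc)
      + 2*ff*cffcee - ff*cgfcee + ff*cfgcee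
  linear_combination (norm := noncomm_ring) -hZ20 - 2*hhD
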